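/- arXiv:2405.05681 — 3 statements merged into one kernel-verified Lean document; each statement's English description precedes it below -/
import Mathlib

section
/- Let g be a nondegenerate symmetric bilinear form on V, let ε ∈ {1, -1}, and let J : V → V be linear with J ∘ J = -id_V and g(J X, J Y) = ε g(X, Y) for all X, Y ∈ V; set ω(X, Y) := g(J X, Y). Then (𝒥_{ε,J}, 𝒥_g, 𝒥_ω) is a generalized almost hypercomplex structure on E: each of 𝒥_{ε,J}, 𝒥_g, 𝒥_ω squares to -id_E, they pairwise anti-commute (𝒥_i ∘ 𝒥_j = -𝒥_j ∘ 𝒥_i for i ≠ j), and 𝒥_ω = 𝒥_g ∘ 𝒥_{ε,J}. -/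
noncomputable section

variable {V : Type*} [AddCommGroup V] [Module ℝ V] [FiniteDimensional ℝ V]

/-- The endomorphism `𝒥_{λ,J}` of `E = V × V*`, `𝒥_{λ,J}(X,ξ) = (J X, λ J* ξ)`. -/
def Jlam (lam : ℝ) (J : V →ₗ[ℝ] V) (u : V × Module.Dual ℝ V) : V × Module.Dual ℝ V :=
  (J u.1, lam • J.dualMap u.2)

/-- The musical isomorphism `♯_h = (♭_h)⁻¹` of a nondegenerate bilinear form `h`. -/
def sharp (h : LinearMap.BilinForm ℝ V) (hh : LinearMap.BilinForm.Nondegenerate h) :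
    Module.Dual ℝ V →ₗ[ℝ] V :=
  (LinearMap.BilinForm.toDual h hh).symm

/-- The endomorphism `𝒥_h` of `E = V × V*`, `𝒥_h(X,ξ) = (-♯_h ξ, ♭_h X)`. -/
def Jform (h : LinearMap.BilinForm ℝ V) (hh : LinearMap.BilinForm.Nondegenerate h)
    (u : V × Module.Dual ℝ V) : V × Module.Dual ℝ V :=
  (-(sharp h hh u.2), h u.1)

lemma flat_sharp (h : LinearMap.BilinForm ℝ V) (hh : LinearMap.BilinForm.Nondegenerate h)
    (ξ : Module.Dual ℝ V) : h (sharp h hh ξ) = ξ := by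
  ext Y
  exact LinearMap.BilinForm.apply_toDual_symm_apply ξ Y

lemma flat_inj (h : LinearMap.BilinForm ℝ V) (hh : LinearMap.BilinForm.Nondegenerate h)
    {x y : V} (hxy : h x = h y) : x = y := by
  have h0 : x - y = 0 := by
    refine hh.1 _ (fun n => ?_)
    rw [map_sub, LinearMap.sub_apply, hxy, sub_self]
  rw [sub_eq_zero] at h0
  exact h0

lemma sharp_eq (h : LinearMap.BilinForm ℝ V) (hh : LinearMap.BilinForm.Nondegenerate h)
    (ξ : Module.Dual ℝ V) (x : V) (hx : h x = ξ) : sharp h hh ξ = x := by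
  refine flat_inj h hh ?_
  rw [flat_sharp, hx]

lemma sharp_flat (h : LinearMap.BilinForm ℝ V) (hh : LinearMap.BilinForm.Nondegenerate h)
    (x : V) : sharp h hh (h x) = x := sharp_eq h hh (h x) x rfl

lemma Jform_sq (h : LinearMap.BilinForm ℝ V) (hh : LinearMap.BilinForm.Nondegenerate h)
    (u : V × Module.Dual ℝ V) : Jform h hh (Jform h hh u) = -u := by
  refine Prod.ext ?_ ?_
  · show -(sharp h hh (h u.1)) = -u.1
    rw [sharp_flat]
  · show h (-(sharp h hh u.2)) = -u.2
    rw [map_neg, flat_sharp]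

/-- `(𝒥_{ε,J}, 𝒥_g, 𝒥_ω)` is a generalized almost hypercomplex structure: each factor
squares to `-id`, they pairwise anti-commute, and `𝒥_ω = 𝒥_g ∘ 𝒥_{ε,J}`. -/
theorem generalized_almost_hypercomplex (g : LinearMap.BilinForm ℝ V)
    (hg : LinearMap.BilinForm.Nondegenerate g)
    (hsym : ∀ X Y : V, g X Y = g Y X) (ε : ℝ) (hε : ε = 1 ∨ ε = -1)
    (J : V →ₗ[ℝ] V) (hJ : ∀ X : V, J (J X) = -X)
    (hcompat : ∀ X Y : V, g (J X) (J Y) = ε * g X Y) :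
    ∃ hω : LinearMap.BilinForm.Nondegenerate (g ∘ₗ J),
      (∀ u : V × Module.Dual ℝ V, Jlam ε J (Jlam ε J u) = -u) ∧
      (∀ u : V × Module.Dual ℝ V, Jform g hg (Jform g hg u) = -u) ∧
      (∀ u : V × Module.Dual ℝ V, Jform (g ∘ₗ J) hω (Jform (g ∘ₗ J) hω u) = -u) ∧
      (∀ u : V × Module.Dual ℝ V, Jlam ε J (Jform g hg u) = -(Jform g hg (Jlam ε J u))) ∧
      (∀ u : V × Module.Dual ℝ V,
        Jlam ε J (Jform (g ∘ₗ J) hω u) = -(Jform (g ∘ₗ J) hω (Jlam ε J u))) ∧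
      (∀ u : V × Module.Dual ℝ V,
        Jform g hg (Jform (g ∘ₗ J) hω u) = -(Jform (g ∘ₗ J) hω (Jform g hg u))) ∧
      (∀ u : V × Module.Dual ℝ V, Jform (g ∘ₗ J) hω u = Jform g hg (Jlam ε J u)) := by
  have hε2 : ε * ε = 1 := by rcases hε with h | h <;> rw [h] <;> norm_num
  -- key pointwise identity: g(JX)Y = -(ε g X (JY))
  have key0 : ∀ X Y : V, g (J X) Y = -(ε * g X (J Y)) := by
    intro X Y
    have := hcompat X (J Y)
    rw [hJ, map_neg] at this
    linarith
  -- ω is nondegenerate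
  have hω : LinearMap.BilinForm.Nondegenerate (g ∘ₗ J) := by
    refine ⟨fun X hX => ?_, fun Y hY => hg.2 Y (fun x => by simpa [hJ] using hY (-(J x)))⟩
    have hJX : J X = 0 := hg.1 (J X) (fun Y => hX Y)
    have h2 := hJ X
    rw [hJX, map_zero] at h2
    exact (neg_eq_zero.mp h2.symm)
  -- key dual identity: g (J X) = -(ε • J.dualMap (g X))
  have keyA : ∀ X : V, g (J X) = -(ε • J.dualMap (g X)) := by
    intro X
    ext Y
    simp only [LinearMap.neg_apply, LinearMap.smul_apply, LinearMap.dualMap_apply, smul_eq_mul]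
    exact key0 X Y
  -- sharp identity: ♯g (J* ξ) = -(ε • J (♯g ξ))
  have keyB : ∀ ξ : Module.Dual ℝ V, sharp g hg (J.dualMap ξ) = -(ε • J (sharp g hg ξ)) := by
    intro ξ
    apply sharp_eq
    ext Y
    have h2 : g (J (sharp g hg ξ)) Y = -(ε * g (sharp g hg ξ) (J Y)) := key0 _ Y
    have h3 : g (sharp g hg ξ) (J Y) = ξ (J Y) := by rw [flat_sharp]
    simp only [map_neg, map_smul, LinearMap.neg_apply, LinearMap.smul_apply, smul_eq_mul,
      LinearMap.dualMap_apply, h2, h3]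
    linear_combination (ξ (J Y)) * hε2
  -- sharp of ω
  have keyC : ∀ ξ : Module.Dual ℝ V, sharp (g ∘ₗ J) hω ξ = -(J (sharp g hg ξ)) := by
    intro ξ
    apply sharp_eq
    ext Y
    simp only [LinearMap.comp_apply, map_neg, LinearMap.neg_apply, hJ, neg_neg]
    rw [flat_sharp]
  refine ⟨hω, ?_, fun u => Jform_sq g hg u, fun u => Jform_sq (g ∘ₗ J) hω u, ?_, ?_, ?_, ?_⟩
  · -- Jlam squared
    intro u
    refine Prod.ext ?_ ?_
    · show J (J u.1) = (-u).1
      rw [hJ]; rfl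
    · show ε • J.dualMap (ε • J.dualMap u.2) = (-u).2
      ext Y
      simp only [LinearMap.smul_apply, LinearMap.dualMap_apply, map_smul, smul_eq_mul,
        Prod.snd_neg, LinearMap.neg_apply, hJ, map_neg]
      linear_combination (-(u.2 Y)) * hε2
  · -- Jlam anticommutes with Jform g
    intro u
    simp only [Jlam, Jform, map_smul, keyB, map_neg, keyA, Prod.neg_mk]
    refine Prod.ext ?_ ?_
    · simp only [smul_neg, neg_neg, smul_smul, hε2, one_smul]
    · simp
  · -- Jlam anticommutes with Jform ω
    intro u
    simp only [Jlam, Jform, LinearMap.comp_apply, map_smul, keyC, keyB, map_neg, Prod.neg_mk, hJ]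
    refine Prod.ext ?_ ?_
    · simp only [neg_neg, smul_neg, smul_smul, hε2, one_smul, map_neg, hJ, neg_neg]
    · ext Y
      simp only [LinearMap.smul_apply, LinearMap.dualMap_apply, LinearMap.comp_apply,
        LinearMap.neg_apply, smul_eq_mul, hJ, map_neg, neg_neg]
      rw [hcompat]
      linear_combination ((g u.1) Y) * hε2
  · -- Jform g anticommutes with Jform ω
    intro u
    simp only [Jform, LinearMap.comp_apply, keyC, map_neg, neg_neg, Prod.neg_mk, sharp_flat]
  · -- ω = g ∘ Jlam
    intro u
    simp only [Jform, Jlam, LinearMap.comp_apply, keyC, map_smul, keyB, neg_neg]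
    refine Prod.ext ?_ rfl
    simp only [smul_neg, neg_neg, smul_smul, hε2, one_smul]

end
end

section
/- Assume g is a nondegenerate symmetric bilinear form on V and J : V → V is linear with J ∘ J = -id_V and g(J X, J Y) = g(X, Y) for all X, Y ∈ V, and define ω(X, Y) := g(J X, Y). Then for any real numbers a, b, c and 𝒥 := a 𝒥_{1,J} + b 𝒥_g + c 𝒥_ω, one has G₀(𝒥 u, 𝒥 v) = (-a² - b² + c²) G₀(u, v) + 2ac · G₀(u, 𝒥_g v) - 2bc · G₀(𝒥_{1,J} u, v) for all u, v ∈ E. -/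
noncomputable section

variable {V : Type*} [AddCommGroup V] [Module ℝ V] [FiniteDimensional ℝ V]

/-- The canonical pairing `G₀` on `E = V × V*`. -/
def Gz (u v : V × Module.Dual ℝ V) : ℝ := (u.2 v.1 + v.2 u.1) / 2

/-- For an almost Hermitian structure `(g, J)`, `ω = g(J·,·)` and
`𝒥 = a 𝒥_{1,J} + b 𝒥_g + c 𝒥_ω`, one has
`G₀(𝒥u, 𝒥v) = (-a²-b²+c²) G₀(u,v) + 2ac G₀(u, 𝒥_g v) - 2bc G₀(𝒥_{1,J} u, v)`. -/
theorem spherical_combination_pairing (g : LinearMap.BilinForm ℝ V)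
    (hg : LinearMap.BilinForm.Nondegenerate g)
    (hsym : ∀ X Y : V, g X Y = g Y X)
    (J : V →ₗ[ℝ] V) (hJ : ∀ X : V, J (J X) = -X)
    (hcompat : ∀ X Y : V, g (J X) (J Y) = g X Y) (a b c : ℝ) :
    ∃ hω : LinearMap.BilinForm.Nondegenerate (g ∘ₗ J),
      let 𝒥 : (V × Module.Dual ℝ V) → (V × Module.Dual ℝ V) :=
        fun w => a • Jlam 1 J w + b • Jform g hg w + c • Jform (g ∘ₗ J) hω w
      ∀ u v : V × Module.Dual ℝ V,
        Gz (𝒥 u) (𝒥 v) = (-a ^ 2 - b ^ 2 + c ^ 2) * Gz u v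
          + 2 * a * c * Gz u (Jform g hg v) - 2 * b * c * Gz (Jlam 1 J u) v := by

  have hgJ : ∀ X Y : V, g (J X) Y = - g X (J Y) := by
    intro X Y
    rw [← hcompat (J X) Y, hJ, map_neg, LinearMap.neg_apply]
  have hω : LinearMap.BilinForm.Nondegenerate (g ∘ₗ J) := by
    refine ⟨?_, ?_⟩
    · intro X hX
      have hJX : J X = 0 := hg.1 _ (fun Y => hX Y)
      have h2 := hJ X
      rw [hJX, map_zero] at h2
      exact neg_eq_zero.mp h2.symm
    · intro Y hY
      apply hg.2 Y
      intro X
      have := hY (-(J X))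
      simpa [hJ] using this
  have hsg : ∀ ξ : Module.Dual ℝ V, g (sharp g hg ξ) = ξ := by
    intro ξ; ext Y
    simp only [sharp, LinearEquiv.coe_coe]
    rw [← LinearMap.BilinForm.toDual_def hg, LinearEquiv.apply_symm_apply]
  have hsω : ∀ ξ : Module.Dual ℝ V, sharp (g ∘ₗ J) hω ξ = - J (sharp g hg ξ) := by
    intro ξ
    simp only [sharp, LinearEquiv.coe_coe]
    rw [LinearEquiv.symm_apply_eq]
    ext Y
    rw [LinearMap.BilinForm.toDual_def hω]
    simp only [LinearMap.comp_apply, map_neg, hJ, neg_neg, LinearMap.neg_apply]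
    exact (LinearMap.congr_fun (hsg ξ) Y).symm
  refine ⟨hω, ?_⟩
  intro 𝒥 u v
  obtain ⟨X, ξ⟩ := u
  obtain ⟨Y, η⟩ := v
  set s := sharp g hg ξ with hs
  set t := sharp g hg η with ht
  have hξ : ξ = g s := (hsg ξ).symm
  have hη : η = g t := (hsg η).symm
  simp only [𝒥, Gz, Jlam, Jform, hsω, Prod.fst_add, Prod.snd_add, Prod.smul_fst, Prod.smul_snd,
    smul_eq_mul, one_smul, neg_neg, ← hs, ← ht]
  rw [hξ, hη]
  simp only [LinearMap.add_apply, LinearMap.smul_apply, LinearMap.dualMap_apply, map_add,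
    map_smul, map_neg, LinearMap.neg_apply, LinearMap.comp_apply, smul_eq_mul, hJ, hgJ,
    neg_neg, map_neg, hcompat]
  have h1 : (g Y) (J X) = -(g X) (J Y) := (hsym Y (J X)).trans (hgJ X Y)
  have h2 : (g t) (J s) = -(g s) (J t) := (hsym t (J s)).trans (hgJ s t)
  have h3 : (g Y) X = (g X) Y := hsym Y X
  have h4 : (g t) s = (g s) t := hsym t s
  have h5 : (g t) X = (g X) t := hsym t X
  have h6 : (g Y) s = (g s) Y := hsym Y s
  have h7 : (g X) (J t) = -(g t) (J X) := (hsym X (J t)).trans (hgJ t X)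
  have h8 : (g Y) (J s) = -(g s) (J Y) := (hsym Y (J s)).trans (hgJ s Y)
  linear_combination (a*b/2)*h1 - (a*b/2)*h2 - (a*c/2)*h3 - (a*c/2)*h4 + ((b^2-c^2)/2)*h5 + ((c^2-b^2)/2)*h6 + b*c*h7 + b*c*h8

end
end

section
/- Assume V ≠ 0, g is a nondegenerate symmetric bilinear form on V, and J : V → V is linear with J ∘ J = -id_V and g(J X, J Y) = g(X, Y) for all X, Y ∈ V; define ω(X, Y) := g(J X, Y). For real numbers a, b, c, the endomorphism 𝒥 := a 𝒥_{1,J} + b 𝒥_g + c 𝒥_ω satisfies 𝒥 ∘ 𝒥 = -id_E if and only if a² + b² + c² = 1; and in that case 𝒥 is strong (i.e. G₀(𝒥 u, v) = -G₀(u, 𝒥 v) for all u, v ∈ E) if and only if c = 1 or c = -1 (equivalently, if and only if a = 0 and b = 0). -/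
noncomputable section

variable {V : Type*} [AddCommGroup V] [Module ℝ V] [FiniteDimensional ℝ V]

lemma sharp_spec (g : LinearMap.BilinForm ℝ V) (hg : g.Nondegenerate)
    (ξ : Module.Dual ℝ V) (Y : V) : g (sharp g hg ξ) Y = ξ Y := by
  simp only [sharp, LinearEquiv.coe_coe]
  exact LinearMap.BilinForm.apply_toDual_symm_apply (B := g) (hB := hg) ξ Y

lemma sharp_flat_s11 (g : LinearMap.BilinForm ℝ V) (hg : g.Nondegenerate)
    (X : V) : sharp g hg (g X) = X := by
  have : g X = LinearMap.BilinForm.toDual g hg X := by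
    ext Y; rw [LinearMap.BilinForm.toDual_def]
  simp only [sharp, LinearEquiv.coe_coe, this, LinearEquiv.symm_apply_apply]

lemma sharp_dualMap (g : LinearMap.BilinForm ℝ V) (hg : g.Nondegenerate)
    (J : V →ₗ[ℝ] V) (hJ : ∀ X : V, J (J X) = -X)
    (hcompat : ∀ X Y : V, g (J X) (J Y) = g X Y)
    (ξ : Module.Dual ℝ V) : sharp g hg (J.dualMap ξ) = -(J (sharp g hg ξ)) := by
  have hskew : ∀ X Y : V, g X (J Y) = -(g (J X) Y) := fun X Y => by
    have := hcompat X (J Y); rw [hJ] at this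
    rw [← this]; simp
  simp only [sharp, LinearEquiv.coe_coe]
  rw [LinearEquiv.symm_apply_eq]
  ext Y
  rw [LinearMap.BilinForm.toDual_def]
  have := hskew (sharp g hg ξ) Y
  simp only [sharp, LinearEquiv.coe_coe] at this
  have h2 := sharp_spec g hg ξ (J Y)
  simp only [sharp, LinearEquiv.coe_coe] at h2
  simp only [LinearMap.dualMap_apply, map_neg, LinearMap.neg_apply]
  rw [← this]; exact h2.symm

lemma sharp_omega (g : LinearMap.BilinForm ℝ V) (hg : g.Nondegenerate)
    (J : V →ₗ[ℝ] V) (hJ : ∀ X : V, J (J X) = -X)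
    (hω : LinearMap.BilinForm.Nondegenerate (g ∘ₗ J))
    (ξ : Module.Dual ℝ V) : sharp (g ∘ₗ J) hω ξ = -(J (sharp g hg ξ)) := by
  simp only [sharp, LinearEquiv.coe_coe]
  rw [LinearEquiv.symm_apply_eq]
  ext Y
  rw [LinearMap.BilinForm.toDual_def]
  have h2 := sharp_spec g hg ξ Y
  simp [hJ, h2]

/-- For `V ≠ 0` and an almost Hermitian structure `(g, J)` with `ω = g(J·,·)`, the combination
`𝒥 = a 𝒥_{1,J} + b 𝒥_g + c 𝒥_ω` squares to `-id` iff `a² + b² + c² = 1`; in that case it is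
strong iff `c = ±1`, equivalently iff `a = 0 ∧ b = 0`. -/
theorem spherical_combination_weak_strong [Nontrivial V] (g : LinearMap.BilinForm ℝ V)
    (hg : LinearMap.BilinForm.Nondegenerate g)
    (hsym : ∀ X Y : V, g X Y = g Y X)
    (J : V →ₗ[ℝ] V) (hJ : ∀ X : V, J (J X) = -X)
    (hcompat : ∀ X Y : V, g (J X) (J Y) = g X Y) (a b c : ℝ) :
    ∃ hω : LinearMap.BilinForm.Nondegenerate (g ∘ₗ J),
      let 𝒥 : (V × Module.Dual ℝ V) → (V × Module.Dual ℝ V) :=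
        fun w => a • Jlam 1 J w + b • Jform g hg w + c • Jform (g ∘ₗ J) hω w
      ((∀ u : V × Module.Dual ℝ V, 𝒥 (𝒥 u) = -u) ↔ a ^ 2 + b ^ 2 + c ^ 2 = 1) ∧
      (a ^ 2 + b ^ 2 + c ^ 2 = 1 →
        (((∀ u v : V × Module.Dual ℝ V, Gz (𝒥 u) v = -Gz u (𝒥 v)) ↔ (c = 1 ∨ c = -1)) ∧
         ((∀ u v : V × Module.Dual ℝ V, Gz (𝒥 u) v = -Gz u (𝒥 v)) ↔ (a = 0 ∧ b = 0)))) := by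
  have hskew : ∀ X Y : V, g X (J Y) = -(g (J X) Y) := fun X Y => by
    have := hcompat X (J Y); rw [hJ] at this
    rw [← this]; simp
  have hskew' : ∀ X Y : V, g (J X) Y = -(g X (J Y)) := fun X Y => by
    rw [hskew]; ring
  have hω : LinearMap.BilinForm.Nondegenerate (g ∘ₗ J) := by
    refine ⟨?_, fun Y hY => ?_⟩
    swap
    · have hJY : J Y = 0 := hg.2 (J Y) (fun X => by simpa [hskew'] using hY X)
      have h6 := hJ Y
      rw [hJY, map_zero] at h6
      exact neg_eq_zero.mp h6.symm
    intro X hX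
    have hJX : J X = 0 := hg.1 (J X) (fun Y => by simpa using hX Y)
    have h2 := hJ X
    rw [hJX, map_zero] at h2
    exact neg_eq_zero.mp h2.symm
  refine ⟨hω, ?_⟩
  intro 𝒥
  set s : Module.Dual ℝ V →ₗ[ℝ] V := sharp g hg with hs_def
  have hspec : ∀ (ξ : Module.Dual ℝ V) (Y : V), g (s ξ) Y = ξ Y := sharp_spec g hg
  have hflat : ∀ X : V, s (g X) = X := sharp_flat_s11 g hg
  have hdm : ∀ ξ : Module.Dual ℝ V, s (J.dualMap ξ) = -(J (s ξ)) :=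
    sharp_dualMap g hg J hJ hcompat
  have h𝒥 : ∀ (X : V) (ξ : Module.Dual ℝ V),
      𝒥 (X, ξ) = (a • J X + b • (-(s ξ)) + c • (J (s ξ)),
        a • J.dualMap ξ + b • g X + c • ((g ∘ₗ J) X)) := by
    intro X ξ
    show a • Jlam 1 J (X, ξ) + b • Jform g hg (X, ξ) + c • Jform (g ∘ₗ J) hω (X, ξ) = _
    simp [Jlam, Jform, sharp_omega g hg J hJ hω, Prod.ext_iff, hs_def]
  have key1 : ∀ u : V × Module.Dual ℝ V, 𝒥 (𝒥 u) = -((a ^ 2 + b ^ 2 + c ^ 2) • u) := by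
    rintro ⟨X, ξ⟩
    rw [h𝒥 X ξ]
    rw [h𝒥]
    refine Prod.ext ?_ ?_
    · show _ = (-((a ^ 2 + b ^ 2 + c ^ 2) • (X, ξ))).1
      simp only [Prod.fst_neg, Prod.smul_fst, Prod.fst]
      simp only [map_add, map_smul, map_neg, hJ, hdm, hflat, LinearMap.comp_apply,
        smul_neg, neg_neg]
      module
    · show _ = (-((a ^ 2 + b ^ 2 + c ^ 2) • (X, ξ))).2
      refine LinearMap.ext fun Y => ?_
      simp only [Prod.snd_neg, Prod.smul_snd, Prod.snd, LinearMap.add_apply,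
        LinearMap.smul_apply, LinearMap.neg_apply, LinearMap.dualMap_apply,
        LinearMap.comp_apply, map_add, map_smul, map_neg, hJ, smul_eq_mul,
        hspec, hcompat]
      rw [hskew X Y]
      ring
  have key2 : ∀ u v : V × Module.Dual ℝ V,
      Gz (𝒥 u) v + Gz u (𝒥 v)
        = a * (u.2 (J v.1) + v.2 (J u.1)) + b * (g u.1 v.1 - u.2 (s v.2)) := by
    rintro ⟨X, ξ⟩ ⟨Y, η⟩
    rw [h𝒥 X ξ, h𝒥 Y η]
    have h1 : g Y X = g X Y := hsym Y X
    have h2 : g (J Y) X = -(g (J X) Y) := by rw [hsym (J Y) X, hskew]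
    have h3 : η (s ξ) = ξ (s η) := by
      rw [← hspec η (s ξ), ← hspec ξ (s η), hsym]
    have h4 : η (J (s ξ)) = -(ξ (J (s η))) := by
      rw [← hspec η (J (s ξ)), ← hspec ξ (J (s η)), hskew (s η) (s ξ),
        hsym (J (s η)) (s ξ)]
    simp only [Gz, LinearMap.add_apply, LinearMap.smul_apply, LinearMap.neg_apply,
      LinearMap.dualMap_apply, LinearMap.comp_apply, map_add, map_smul, map_neg,
      smul_eq_mul, hspec]
    linear_combination (b / 2) * h1 + (c / 2) * h2 - (b / 2) * h3 + (c / 2) * h4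
  have iff1 : (∀ u : V × Module.Dual ℝ V, 𝒥 (𝒥 u) = -u) ↔ a ^ 2 + b ^ 2 + c ^ 2 = 1 := by
    constructor
    · intro h
      obtain ⟨X, hX⟩ := exists_ne (0 : V)
      have h1 := h (X, 0)
      rw [key1] at h1
      have h2 : ((a ^ 2 + b ^ 2 + c ^ 2) • ((X, 0) : V × Module.Dual ℝ V)) = (X, 0) :=
        neg_injective h1
      have h3 : (a ^ 2 + b ^ 2 + c ^ 2) • X = X := congrArg Prod.fst h2
      have h4 : (a ^ 2 + b ^ 2 + c ^ 2 - 1) • X = 0 := by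
        rw [sub_smul, one_smul, h3, sub_self]
      rcases smul_eq_zero.mp h4 with h5 | h5
      · linarith
      · exact absurd h5 hX
    · intro h u
      rw [key1, h, one_smul]
  have strong_iff : (∀ u v : V × Module.Dual ℝ V, Gz (𝒥 u) v = -Gz u (𝒥 v)) ↔
      (a = 0 ∧ b = 0) := by
    constructor
    · intro h
      have hsum : ∀ u v : V × Module.Dual ℝ V, Gz (𝒥 u) v + Gz u (𝒥 v) = 0 := fun u v => by
        rw [h u v]; ring
      have hb : b = 0 := by
        by_contra hb
        have hzero : ∀ X Y : V, g X Y = 0 := by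
          intro X Y
          have h1 := (hsum (X, 0) (Y, 0)).symm.trans (key2 (X, 0) (Y, 0))
          simp only [LinearMap.zero_apply, map_zero, add_zero, zero_add, mul_zero,
            sub_zero, zero_sub, mul_neg, neg_zero] at h1
          rcases mul_eq_zero.mp h1.symm with h2 | h2
          · exact absurd h2 hb
          · exact h2
        obtain ⟨X, hX⟩ := exists_ne (0 : V)
        exact hX (hg.1 X (hzero X))
      have ha : a = 0 := by
        by_contra ha
        have hzero : ∀ (ξ : Module.Dual ℝ V) (Y : V), ξ (J Y) = 0 := by
          intro ξ Y
          have h1 := (hsum (0, ξ) (Y, 0)).symm.trans (key2 (0, ξ) (Y, 0))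
          simp only [LinearMap.zero_apply, map_zero, add_zero, zero_add, mul_zero,
            sub_zero, zero_sub, mul_neg, neg_zero, sub_self] at h1
          rcases mul_eq_zero.mp h1.symm with h2 | h2
          · exact absurd h2 ha
          · exact h2
        obtain ⟨Y, hY⟩ := exists_ne (0 : V)
        have hJY : J Y = 0 :=
          (Module.forall_dual_apply_eq_zero_iff ℝ (J Y)).mp fun ξ => hzero ξ Y
        have h6 := hJ Y
        rw [hJY, map_zero] at h6
        exact hY (neg_eq_zero.mp h6.symm)
      exact ⟨ha, hb⟩
    · rintro ⟨ha, hb⟩ u v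
      have h1 := key2 u v
      rw [ha, hb] at h1
      simp only [zero_mul, add_zero] at h1
      linarith
  refine ⟨iff1, fun hs => ?_⟩
  have hab_iff : (a = 0 ∧ b = 0) ↔ (c = 1 ∨ c = -1) := by
    constructor
    · rintro ⟨ha, hb⟩
      have h0 : (c - 1) * (c + 1) = 0 := by nlinarith
      rcases mul_eq_zero.mp h0 with h | h
      · left; linarith
      · right; linarith
    · intro hc
      have hc2 : c ^ 2 = 1 := by rcases hc with h | h <;> rw [h] <;> norm_num
      constructor <;> nlinarith [sq_nonneg a, sq_nonneg b]
  exact ⟨strong_iff.trans hab_iff, strong_iff⟩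


end
end
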